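/- Let S = [[A, B], [C, D]] be a symplectic matrix. Then Aᵀ restricted to R(B)ᗮ is a linear isomorphism onto ker(B). -/

import Mathlib

open Matrix

theorem Matrix.piLp_equiv_toEuclideanLin_apply {d : ℕ} (M : Matrix (Fin d) (Fin d) ℝ)
    (v : EuclideanSpace ℝ (Fin d)) :
    WithLp.equiv 2 _ (Matrix.toEuclideanLin M v) = M *ᵥ WithLp.equiv 2 _ v := rfl

private theorem sympl_inner_aux {d : ℕ} (B : Matrix (Fin d) (Fin d) ℝ)
    (x y : EuclideanSpace ℝ (Fin d)) :
    inner ℝ (Matrix.toEuclideanLin B y) x = (Bᵀ *ᵥ (WithLp.equiv 2 _ x)) ⬝ᵥ (WithLp.equiv 2 _ y) := by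
  simp only [PiLp.inner_apply, RCLike.inner_apply, starRingEnd_apply, star_trivial]
  show (WithLp.equiv 2 _ x) ⬝ᵥ (B *ᵥ (WithLp.equiv 2 _ y)) = _
  rw [Matrix.mulVec_transpose, Matrix.dotProduct_mulVec]

private theorem sympl_perp_aux {d : ℕ} (B : Matrix (Fin d) (Fin d) ℝ)
    (x : EuclideanSpace ℝ (Fin d)) :
    x ∈ (LinearMap.range (Matrix.toEuclideanLin B))ᗮ ↔ Bᵀ *ᵥ (WithLp.equiv 2 _ x) = 0 := by
  constructor
  · intro hx
    have h := hx (Matrix.toEuclideanLin B ((WithLp.equiv 2 _).symm (Bᵀ *ᵥ WithLp.equiv 2 _ x)))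
      ⟨_, rfl⟩
    rw [sympl_inner_aux] at h
    simp only [Equiv.apply_symm_apply] at h
    exact dotProduct_self_eq_zero.mp h
  · intro hx u hu
    obtain ⟨y, rfl⟩ := hu
    rw [sympl_inner_aux, hx, zero_dotProduct]

private theorem sympl_ker_aux {d : ℕ} (B : Matrix (Fin d) (Fin d) ℝ)
    (x : EuclideanSpace ℝ (Fin d)) :
    x ∈ LinearMap.ker (Matrix.toEuclideanLin B) ↔ B *ᵥ (WithLp.equiv 2 _ x) = 0 := by
  rw [LinearMap.mem_ker, Matrix.toEuclideanLin_apply]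
  simp

theorem symplectic_AT_iso_rangeB_perp_kerB {d : ℕ} (A B C D : Matrix (Fin d) (Fin d) ℝ)
    (hS : (fromBlocks A B C D)ᵀ * fromBlocks 0 1 (-1) 0 * fromBlocks A B C D
        = fromBlocks (0 : Matrix (Fin d) (Fin d) ℝ) 1 (-1) 0) :
    ((LinearMap.range (Matrix.toEuclideanLin B))ᗮ).map (Matrix.toEuclideanLin Aᵀ)
        = LinearMap.ker (Matrix.toEuclideanLin B)
      ∧ Set.InjOn (Matrix.toEuclideanLin Aᵀ)
        ((LinearMap.range (Matrix.toEuclideanLin B))ᗮ : Set (EuclideanSpace ℝ (Fin d))) := by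
  -- Block equations from SᵀJS = J
  have e2 : Aᵀ * D - Cᵀ * B = 1 := by
    have := congrArg Matrix.toBlocks₁₂ hS
    simp only [Matrix.fromBlocks_multiply, Matrix.fromBlocks_transpose,
      Matrix.toBlocks_fromBlocks₁₂, Matrix.zero_mul, Matrix.mul_zero, Matrix.one_mul,
      Matrix.mul_one, Matrix.neg_mul, Matrix.mul_neg, add_zero, zero_add] at this
    linear_combination (norm := noncomm_ring) this
  have e4 : Bᵀ * D - Dᵀ * B = 0 := by
    have := congrArg Matrix.toBlocks₂₂ hS
    simp only [Matrix.fromBlocks_multiply, Matrix.fromBlocks_transpose,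
      Matrix.toBlocks_fromBlocks₂₂, Matrix.zero_mul, Matrix.mul_zero, Matrix.one_mul,
      Matrix.mul_one, Matrix.neg_mul, Matrix.mul_neg, add_zero, zero_add] at this
    linear_combination (norm := noncomm_ring) this
  -- Derive SJSᵀ = J, i.e. the "other" block equations
  set S := fromBlocks A B C D with hSdef
  set J : Matrix (Fin d ⊕ Fin d) (Fin d ⊕ Fin d) ℝ := fromBlocks 0 1 (-1) 0 with hJdef
  have hleft : (fromBlocks 0 (-1) 1 0 * Sᵀ * J) * S = 1 := by
    calc (fromBlocks 0 (-1) 1 0 * Sᵀ * J) * S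
        = fromBlocks 0 (-1) 1 0 * (Sᵀ * J * S) := by
          simp only [Matrix.mul_assoc]
      _ = 1 := by
          rw [hS, hJdef]
          simp [Matrix.fromBlocks_multiply, Matrix.fromBlocks_one]
  have hright : S * (fromBlocks 0 (-1) 1 0 * Sᵀ * J) = 1 := mul_eq_one_comm.mp hleft
  have h2 : S * (fromBlocks 0 (-1) 1 0) * Sᵀ = fromBlocks 0 (-1) 1 0 := by
    have := congrArg (· * fromBlocks (0 : Matrix (Fin d) (Fin d) ℝ) (-1) 1 0) hright
    simp only [Matrix.mul_assoc] at this ⊢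
    rw [hJdef] at this
    simpa [Matrix.fromBlocks_multiply, Matrix.fromBlocks_one, Matrix.mul_assoc] using this
  rw [hSdef, Matrix.fromBlocks_transpose] at h2
  have hBA : B * Aᵀ = A * Bᵀ := by
    have := congrArg Matrix.toBlocks₁₁ h2
    simp only [Matrix.fromBlocks_multiply, Matrix.fromBlocks_transpose,
      Matrix.toBlocks_fromBlocks₁₁, Matrix.zero_mul, Matrix.mul_zero, Matrix.one_mul,
      Matrix.mul_one, Matrix.neg_mul, Matrix.mul_neg, add_zero, zero_add] at this
    linear_combination (norm := noncomm_ring) this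
  have hDA : D * Aᵀ - C * Bᵀ = 1 := by
    have := congrArg Matrix.toBlocks₂₁ h2
    simp only [Matrix.fromBlocks_multiply, Matrix.fromBlocks_transpose,
      Matrix.toBlocks_fromBlocks₂₁, Matrix.zero_mul, Matrix.mul_zero, Matrix.one_mul,
      Matrix.mul_one, Matrix.neg_mul, Matrix.mul_neg, add_zero, zero_add] at this
    linear_combination (norm := noncomm_ring) this
  constructor
  · ext x
    rw [Submodule.mem_map, sympl_ker_aux]
    constructor
    · rintro ⟨y, hy, rfl⟩
      rw [sympl_perp_aux] at hy
      rw [Matrix.piLp_equiv_toEuclideanLin_apply, Matrix.mulVec_mulVec, hBA,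
        ← Matrix.mulVec_mulVec, hy, Matrix.mulVec_zero]
    · intro hx
      refine ⟨Matrix.toEuclideanLin D x, ?_, ?_⟩
      · rw [sympl_perp_aux, Matrix.piLp_equiv_toEuclideanLin_apply, Matrix.mulVec_mulVec,
          sub_eq_zero.mp e4, ← Matrix.mulVec_mulVec, hx, Matrix.mulVec_zero]
      · apply (WithLp.equiv 2 (Fin d → ℝ)).injective
        rw [Matrix.piLp_equiv_toEuclideanLin_apply, Matrix.piLp_equiv_toEuclideanLin_apply,
          Matrix.mulVec_mulVec]
        have hAD : Aᵀ * D = 1 + Cᵀ * B := by linear_combination (norm := noncomm_ring) e2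
        rw [hAD, Matrix.add_mulVec, Matrix.one_mulVec, ← Matrix.mulVec_mulVec, hx,
          Matrix.mulVec_zero, add_zero]
  · intro x hx y hy hxy
    rw [SetLike.mem_coe, sympl_perp_aux] at hx hy
    have hAxy : Aᵀ *ᵥ (WithLp.equiv 2 _ x) = Aᵀ *ᵥ (WithLp.equiv 2 _ y) := by
      have := congrArg (WithLp.equiv 2 (Fin d → ℝ)) hxy
      simpa only [Matrix.piLp_equiv_toEuclideanLin_apply] using this
    apply (WithLp.equiv 2 (Fin d → ℝ)).injective
    have key : ∀ z : EuclideanSpace ℝ (Fin d),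
        (WithLp.equiv 2 (Fin d → ℝ)) z
          = D *ᵥ (Aᵀ *ᵥ (WithLp.equiv 2 _ z)) - C *ᵥ (Bᵀ *ᵥ (WithLp.equiv 2 _ z)) := by
      intro z
      rw [Matrix.mulVec_mulVec, Matrix.mulVec_mulVec, ← Matrix.sub_mulVec, hDA,
        Matrix.one_mulVec]
    rw [key x, key y, hAxy, hx, hy]
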